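/- The infimum over score vectors of FUJI is not attained: for every ranking r with fixed ordering and every k < n, and every candidate minimizing ranking s, there exists another ranking s' (with the same reverse ordering) with FUJI(r, s', k) < FUJI(r, s, k); in particular, as the score ratios between consecutive ranks tend to infinity, FUJI(r, s, k) → J(r, s, k) = max(0, 2k−n)/min(2k, n) but never attains this value when all scores are positive. -/

import Mathlib

open Finset Filter
open scoped Classical

noncomputable def rankOf {n : ℕ} (r : Fin n → ℝ) (i : Fin n) : ℕ :=
  (Finset.univ.filter (fun j => r i ≤ r j)).card

noncomputable def topk {n : ℕ} (r : Fin n → ℝ) (k : ℕ) : Finset (Fin n) :=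
  Finset.univ.filter (fun i => rankOf r i ≤ k)

noncomputable def jac {n : ℕ} (r s : Fin n → ℝ) (k : ℕ) : ℝ :=
  ((topk r k ∩ topk s k).card : ℝ) / ((topk r k ∪ topk s k).card : ℝ)

noncomputable def kthScore {n : ℕ} (r : Fin n → ℝ) (k : ℕ) : ℝ :=
  if h : (topk r k).Nonempty then (topk r k).inf' h r else 0

noncomputable def fmu {n : ℕ} (r : Fin n → ℝ) (k : ℕ) (i : Fin n) : ℝ :=
  if i ∈ topk r k then 1 else r i / kthScore r k

noncomputable def fuji {n : ℕ} (r s : Fin n → ℝ) (k : ℕ) : ℝ :=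
  (∑ x ∈ topk r k ∪ topk s k, min (fmu r k x) (fmu s k x)) /
  (∑ x ∈ topk r k ∪ topk s k, max (fmu r k x) (fmu s k x))

section helpers

variable {n : ℕ}

lemma rank_anti (r : Fin n → ℝ) {x y : Fin n} (h : r x < r y) :
    rankOf r y < rankOf r x := by
  apply Finset.card_lt_card
  rw [Finset.ssubset_iff_of_subset (Finset.monotone_filter_right _ (fun j _ hj => h.le.trans hj))]
  exact ⟨x, by simp, by simp [h.not_ge]⟩

lemma rank_lt_iff (r : Fin n → ℝ) (hr : Function.Injective r) {x y : Fin n} :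
    rankOf r x < rankOf r y ↔ r y < r x := by
  constructor
  · intro h
    rcases lt_trichotomy (r x) (r y) with h' | h' | h'
    · exact absurd (rank_anti r h') (by omega)
    · exact absurd (hr h') (by rintro rfl; omega)
    · exact h'
  · exact rank_anti r

lemma rank_le_iff (r : Fin n → ℝ) (hr : Function.Injective r) {x y : Fin n} :
    rankOf r x ≤ rankOf r y ↔ r y ≤ r x := by
  rw [← not_lt, ← not_lt, not_iff_not, rank_lt_iff r hr]

lemma rankOf_pos (r : Fin n → ℝ) (x : Fin n) : 1 ≤ rankOf r x :=
  Finset.card_pos.mpr ⟨x, by simp⟩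

lemma rank_le_n (r : Fin n → ℝ) (x : Fin n) : rankOf r x ≤ n := by
  simpa [rankOf] using Finset.card_filter_le Finset.univ (fun j => r x ≤ r j)

lemma rank_inj (r : Fin n → ℝ) (hr : Function.Injective r) :
    Function.Injective (rankOf r) := by
  intro x y h
  apply hr
  exact le_antisymm ((rank_le_iff r hr).mp h.ge) ((rank_le_iff r hr).mp h.le)

lemma rank_image (r : Fin n → ℝ) (hr : Function.Injective r) :
    Finset.univ.image (rankOf r) = Finset.Icc 1 n := by
  apply Finset.eq_of_subset_of_card_le
  · intro m hm
    simp only [Finset.mem_image] at hm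
    obtain ⟨x, -, rfl⟩ := hm
    simp [Finset.mem_Icc, rankOf_pos r x, rank_le_n r x]
  · rw [Finset.card_image_of_injective _ (rank_inj r hr)]
    simp

lemma card_rank_filter (r : Fin n → ℝ) (hr : Function.Injective r) (p : ℕ → Prop)
    [DecidablePred p] :
    (Finset.univ.filter fun x => p (rankOf r x)).card = ((Finset.Icc 1 n).filter p).card := by
  rw [← rank_image r hr, Finset.filter_image,
    Finset.card_image_of_injective _ (rank_inj r hr)]


lemma mem_topk (r : Fin n → ℝ) (k : ℕ) (x : Fin n) :
    x ∈ topk r k ↔ rankOf r x ≤ k := by simp [topk]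

lemma card_topk (r : Fin n → ℝ) (hr : Function.Injective r) {k : ℕ} (hk : k ≤ n) :
    (topk r k).card = k := by
  rw [topk, card_rank_filter r hr (fun m => m ≤ k)]
  have : (Finset.Icc 1 n).filter (fun m => m ≤ k) = Finset.Icc 1 k := by
    ext m; simp only [Finset.mem_filter, Finset.mem_Icc]; omega
  rw [this, Nat.card_Icc]; omega

lemma topk_nonempty (r : Fin n → ℝ) (hr : Function.Injective r) {k : ℕ}
    (hk1 : 1 ≤ k) (hk : k ≤ n) : (topk r k).Nonempty := by
  rw [← Finset.card_pos, card_topk r hr hk]; omega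

lemma kth_eq (r : Fin n → ℝ) (hr : Function.Injective r) {k : ℕ}
    (hk1 : 1 ≤ k) (hk : k ≤ n) :
    kthScore r k = (topk r k).inf' (topk_nonempty r hr hk1 hk) r := by
  rw [kthScore, dif_pos]

lemma kth_pos (r : Fin n → ℝ) (hr : Function.Injective r) (hrpos : ∀ i, 0 < r i) {k : ℕ}
    (hk1 : 1 ≤ k) (hk : k ≤ n) : 0 < kthScore r k := by
  rw [kth_eq r hr hk1 hk]
  obtain ⟨i, -, hi⟩ := Finset.exists_mem_eq_inf' (topk_nonempty r hr hk1 hk) r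
  rw [hi]; exact hrpos i

lemma lt_kth (r : Fin n → ℝ) (hr : Function.Injective r) {k : ℕ}
    (hk1 : 1 ≤ k) (hk : k ≤ n) {x : Fin n} (hx : x ∉ topk r k) :
    r x < kthScore r k := by
  rw [kth_eq r hr hk1 hk, Finset.lt_inf'_iff]
  intro y hy
  rw [mem_topk] at hx hy
  rw [← rank_lt_iff r hr]
  omega

lemma fmu_pos (r : Fin n → ℝ) (hr : Function.Injective r) (hrpos : ∀ i, 0 < r i) {k : ℕ}
    (hk1 : 1 ≤ k) (hk : k ≤ n) (x : Fin n) : 0 < fmu r k x := by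
  rw [fmu]
  split
  · norm_num
  · exact div_pos (hrpos x) (kth_pos r hr hrpos hk1 hk)

lemma fmu_lt_one (r : Fin n → ℝ) (hr : Function.Injective r) (hrpos : ∀ i, 0 < r i) {k : ℕ}
    (hk1 : 1 ≤ k) (hk : k ≤ n) {x : Fin n} (hx : x ∉ topk r k) : fmu r k x < 1 := by
  rw [fmu, if_neg hx]
  rw [div_lt_one (kth_pos r hr hrpos hk1 hk)]
  exact lt_kth r hr hk1 hk hx

lemma fmu_le_one (r : Fin n → ℝ) (hr : Function.Injective r) (hrpos : ∀ i, 0 < r i) {k : ℕ}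
    (hk1 : 1 ≤ k) (hk : k ≤ n) (x : Fin n) : fmu r k x ≤ 1 := by
  by_cases hx : x ∈ topk r k
  · simp [fmu, hx]
  · exact (fmu_lt_one r hr hrpos hk1 hk hx).le

section main

variable {r s : Fin n → ℝ} {k : ℕ}

lemma topk_rev (hs : Function.Injective s)
    (hsrev : ∀ x, rankOf s x = n + 1 - rankOf r x) (x : Fin n) :
    x ∈ topk s k ↔ n + 1 - rankOf r x ≤ k := by
  rw [mem_topk, hsrev]

lemma inter_card (hr : Function.Injective r) (hs : Function.Injective s)
    (hsrev : ∀ x, rankOf s x = n + 1 - rankOf r x) (hk1 : 1 ≤ k) (hkn : k < n) :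
    (topk r k ∩ topk s k).card = k + 1 - (n + 1 - k) := by
  have hset : topk r k ∩ topk s k
      = Finset.univ.filter (fun x => rankOf r x ≤ k ∧ n + 1 - rankOf r x ≤ k) := by
    ext x
    simp [Finset.mem_inter, mem_topk, topk_rev hs hsrev]
  rw [hset, card_rank_filter r hr (fun m => m ≤ k ∧ n + 1 - m ≤ k)]
  have : (Finset.Icc 1 n).filter (fun m => m ≤ k ∧ n + 1 - m ≤ k)
      = Finset.Icc (n + 1 - k) k := by
    ext m; simp only [Finset.mem_filter, Finset.mem_Icc]; omega
  rw [this, Nat.card_Icc]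

lemma union_card (hr : Function.Injective r) (hs : Function.Injective s)
    (hsrev : ∀ x, rankOf s x = n + 1 - rankOf r x) (hk1 : 1 ≤ k) (hkn : k < n) :
    (topk r k ∪ topk s k).card = 2 * k - (k + 1 - (n + 1 - k)) := by
  have h := Finset.card_union_add_card_inter (topk r k) (topk s k)
  rw [card_topk r hr hkn.le, card_topk s hs hkn.le,
    inter_card hr hs hsrev hk1 hkn] at h
  omega

lemma sdiff_nonempty' (hr : Function.Injective r) (hs : Function.Injective s)
    (hsrev : ∀ x, rankOf s x = n + 1 - rankOf r x) (hk1 : 1 ≤ k) (hkn : k < n) :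
    (topk r k \ topk s k).Nonempty := by
  rw [← Finset.card_pos]
  have h := Finset.card_sdiff_add_card_inter (topk r k) (topk s k)
  rw [card_topk r hr hkn.le, inter_card hr hs hsrev hk1 hkn] at h
  omega

lemma sum_max_eq (hr : Function.Injective r) (hrpos : ∀ i, 0 < r i)
    (hs : Function.Injective s) (hspos : ∀ i, 0 < s i) (hk1 : 1 ≤ k) (hkn : k < n) :
    ∑ x ∈ topk r k ∪ topk s k, max (fmu r k x) (fmu s k x)
      = ((topk r k ∪ topk s k).card : ℝ) := by
  rw [Finset.sum_congr rfl (fun x hx => ?_), Finset.sum_const, nsmul_eq_mul, mul_one]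
  rcases Finset.mem_union.mp hx with h | h
  · have h1 : fmu r k x = 1 := by simp [fmu, h]
    exact max_eq_left_iff.mpr (by rw [h1]; exact fmu_le_one s hs hspos hk1 hkn.le x) |>.trans h1
  · have h1 : fmu s k x = 1 := by simp [fmu, h]
    exact max_eq_right_iff.mpr (by rw [h1]; exact fmu_le_one r hr hrpos hk1 hkn.le x) |>.trans h1


lemma sum_min_gt (hr : Function.Injective r) (hrpos : ∀ i, 0 < r i)
    (hs : Function.Injective s) (hspos : ∀ i, 0 < s i)
    (hsrev : ∀ x, rankOf s x = n + 1 - rankOf r x) (hk1 : 1 ≤ k) (hkn : k < n) :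
    ((topk r k ∩ topk s k).card : ℝ)
      < ∑ x ∈ topk r k ∪ topk s k, min (fmu r k x) (fmu s k x) := by
  have hsub : topk r k ∩ topk s k ⊆ topk r k ∪ topk s k :=
    (Finset.inter_subset_left).trans Finset.subset_union_left
  rw [← Finset.sum_sdiff hsub]
  have h2 : ∑ x ∈ topk r k ∩ topk s k, min (fmu r k x) (fmu s k x)
      = ((topk r k ∩ topk s k).card : ℝ) := by
    rw [Finset.sum_congr rfl (fun x hx => ?_), Finset.sum_const, nsmul_eq_mul, mul_one]
    rw [Finset.mem_inter] at hx
    simp [fmu, hx.1, hx.2]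
  have h3 : 0 < ∑ x ∈ (topk r k ∪ topk s k) \ (topk r k ∩ topk s k),
      min (fmu r k x) (fmu s k x) := by
    apply Finset.sum_pos
    · intro x hx
      exact lt_min (fmu_pos r hr hrpos hk1 hkn.le x) (fmu_pos s hs hspos hk1 hkn.le x)
    · obtain ⟨x₀, hx₀⟩ := sdiff_nonempty' hr hs hsrev hk1 hkn
      rw [Finset.mem_sdiff] at hx₀
      refine ⟨x₀, Finset.mem_sdiff.mpr ⟨Finset.mem_union_left _ hx₀.1, ?_⟩⟩
      rw [Finset.mem_inter]; tauto
  linarith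

end main

end helpers

theorem fuji_infimum_not_attained {n : ℕ} (r : Fin n → ℝ)
    (hr : Function.Injective r) (hrpos : ∀ i, 0 < r i)
    (k : ℕ) (hk1 : 1 ≤ k) (hkn : k < n)
    (s : Fin n → ℝ) (hs : Function.Injective s) (hspos : ∀ i, 0 < s i)
    (hsrev : ∀ x, rankOf s x = n + 1 - rankOf r x) :
    (∃ s' : Fin n → ℝ, Function.Injective s' ∧ (∀ i, 0 < s' i) ∧
        (∀ x, rankOf s' x = n + 1 - rankOf r x) ∧
        fuji r s' k < fuji r s k) ∧
    max (0 : ℝ) (2 * k - n) / min (2 * k : ℝ) (n : ℝ) < fuji r s k := by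
  have hUcard : (topk r k ∪ topk s k).card = 2 * k - (k + 1 - (n + 1 - k)) :=
    union_card hr hs hsrev hk1 hkn
  have hUpos : (0 : ℝ) < ((topk r k ∪ topk s k).card : ℝ) := by
    rw [hUcard]; exact_mod_cast (by omega : 0 < 2 * k - (k + 1 - (n + 1 - k)))
  constructor
  · -- part 1: existence of strictly better s'
    set s' : Fin n → ℝ := fun x => s x * s x with hs'def
    have hs'inj : Function.Injective s' := fun a b h =>
      hs ((mul_self_inj (hspos a).le (hspos b).le).mp h)
    have hs'pos : ∀ i, 0 < s' i := fun i => mul_pos (hspos i) (hspos i)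
    have hrank : ∀ x, rankOf s' x = rankOf s x := by
      intro x
      unfold rankOf
      congr 1
      apply Finset.filter_congr
      intro j _
      simp only [hs'def]
      exact (mul_self_le_mul_self_iff (hspos x).le (hspos j).le).symm
    have hs'rev : ∀ x, rankOf s' x = n + 1 - rankOf r x := fun x => by
      rw [hrank, hsrev]
    have htop : topk s' k = topk s k := by
      ext x; simp [mem_topk, hrank]
    have hne := topk_nonempty s hs hk1 hkn.le
    have hkthpos := kth_pos s hs hspos hk1 hkn.le
    have hinfpos : 0 < (topk s k).inf' hne s := by
      rwa [kth_eq s hs hk1 hkn.le] at hkthpos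
    have hkth' : kthScore s' k = kthScore s k * kthScore s k := by
      rw [kthScore, kthScore, htop, dif_pos hne, dif_pos hne]
      apply le_antisymm
      · obtain ⟨i, hi, hieq⟩ := Finset.exists_mem_eq_inf' hne s
        calc (topk s k).inf' hne s' ≤ s' i := Finset.inf'_le _ hi
          _ = (topk s k).inf' hne s * (topk s k).inf' hne s := by
              simp only [hs'def]; rw [← hieq]
      · rw [Finset.le_inf'_iff]
        intro y hy
        exact mul_le_mul (Finset.inf'_le _ hy) (Finset.inf'_le _ hy)
          hinfpos.le (hspos y).le
    have hfmu' : ∀ x ∉ topk s k, fmu s' k x = fmu s k x * fmu s k x := by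
      intro x hx
      rw [fmu, fmu, htop, if_neg hx, if_neg hx, hkth']
      rw [div_mul_div_comm]
    have hfmu_le : ∀ x, fmu s' k x ≤ fmu s k x := by
      intro x
      by_cases hx : x ∈ topk s k
      · simp [fmu, htop, hx]
      · rw [hfmu' x hx]
        exact mul_le_of_le_one_left (fmu_pos s hs hspos hk1 hkn.le x).le
          (fmu_le_one s hs hspos hk1 hkn.le x)
    refine ⟨s', hs'inj, hs'pos, hs'rev, ?_⟩
    rw [fuji, fuji, htop,
      sum_max_eq hr hrpos hs hspos hk1 hkn]
    have hmax' : ∑ x ∈ topk r k ∪ topk s k, max (fmu r k x) (fmu s' k x)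
        = ((topk r k ∪ topk s k).card : ℝ) := by
      have := sum_max_eq (s := s') hr hrpos hs'inj hs'pos hk1 hkn
      rwa [htop] at this
    rw [hmax']
    rw [div_lt_div_iff_of_pos_right hUpos]
    apply Finset.sum_lt_sum
    · intro x _
      exact min_le_min le_rfl (hfmu_le x)
    · obtain ⟨x₀, hx₀⟩ := sdiff_nonempty' hr hs hsrev hk1 hkn
      rw [Finset.mem_sdiff] at hx₀
      refine ⟨x₀, Finset.mem_union_left _ hx₀.1, ?_⟩
      have h1 : fmu r k x₀ = 1 := by simp [fmu, hx₀.1]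
      have hlt1 : fmu s k x₀ < 1 := fmu_lt_one s hs hspos hk1 hkn.le hx₀.2
      have hpos : 0 < fmu s k x₀ := fmu_pos s hs hspos hk1 hkn.le x₀
      have hlt' : fmu s' k x₀ < fmu s k x₀ := by
        rw [hfmu' x₀ hx₀.2]
        exact mul_lt_of_lt_one_left hpos hlt1
      rw [min_eq_right (by rw [h1]; exact ((hfmu_le x₀).trans hlt1.le)),
        min_eq_right (by rw [h1]; exact hlt1.le)]
      exact hlt'
  · -- part 2: strict lower bound
    have hkey : fuji r s k
        = (∑ x ∈ topk r k ∪ topk s k, min (fmu r k x) (fmu s k x))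
          / ((topk r k ∪ topk s k).card : ℝ) := by
      rw [fuji, sum_max_eq hr hrpos hs hspos hk1 hkn]
    have hc1 : ((topk r k ∩ topk s k).card : ℝ) = max (0 : ℝ) (2 * k - n) := by
      rw [inter_card hr hs hsrev hk1 hkn]
      rcases le_or_gt (2 * k) n with h | h
      · have : k + 1 - (n + 1 - k) = 0 := by omega
        rw [this, max_eq_left (by rw [sub_nonpos]; exact_mod_cast h)]
        norm_num
      · have : k + 1 - (n + 1 - k) = 2 * k - n := by omega
        rw [this, max_eq_right (by rw [sub_nonneg]; exact_mod_cast h.le)]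
        push_cast [Nat.cast_sub h.le]; ring
    have hc2 : ((topk r k ∪ topk s k).card : ℝ) = min (2 * k : ℝ) (n : ℝ) := by
      rw [hUcard]
      rcases le_or_gt (2 * k) n with h | h
      · have : 2 * k - (k + 1 - (n + 1 - k)) = 2 * k := by omega
        rw [this, min_eq_left (by exact_mod_cast h)]
        push_cast; ring
      · have : 2 * k - (k + 1 - (n + 1 - k)) = n := by omega
        rw [this, min_eq_right (by exact_mod_cast h.le)]
    rw [hkey, ← hc1, ← hc2, div_lt_div_iff_of_pos_right hUpos]
    exact sum_min_gt hr hrpos hs hspos hsrev hk1 hkn
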